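/- Case (IV), classification: Every irreducible case-IV representation (V, ρ, X, Y) is isomorphic to L(η) for some character η of Γ with η|_Λ = ξ, where an isomorphism of representations is a linear isomorphism intertwining X, Y and every ρ(h). -/

import Mathlib

noncomputable section

/-- `(V, ρ, X, Y)` is a representation of the common part of the rank-2 algebra `A(ξ)`:
`ρ` is a group homomorphism (recorded via multiplicativity and unitality),
`ρ(h)∘X = χ₁(h)·(X∘ρ(h))` and `ρ(h)∘Y = χ₂(h)·(Y∘ρ(h))` for all `h ∈ Γ`, and
`ρ(g) = ξ(g)·id` for all `g ∈ Λ`. -/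
def IsRep {Γ : Type*} [CommGroup Γ] (χ₁ χ₂ : Γ →* ℂˣ) (Λ : Subgroup Γ) (ξ : ↥Λ →* ℂˣ)
    {V : Type*} [AddCommGroup V] [Module ℂ V]
    (ρ : Γ → Module.End ℂ V) (X Y : Module.End ℂ V) : Prop :=
  (∀ a b : Γ, ρ (a * b) = ρ a * ρ b) ∧ ρ 1 = 1 ∧
  (∀ h : Γ, ρ h * X = (χ₁ h : ℂ) • (X * ρ h)) ∧
  (∀ h : Γ, ρ h * Y = (χ₂ h : ℂ) • (Y * ρ h)) ∧
  ∀ g : Λ, ρ (g : Γ) = (ξ g : ℂ) • (1 : Module.End ℂ V)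

/-- A subspace `W` is stable under `X`, `Y` and all `ρ(h)`. -/
def Stable2 {Γ : Type*} {V : Type*} [AddCommGroup V] [Module ℂ V]
    (ρ : Γ → Module.End ℂ V) (X Y : Module.End ℂ V) (W : Submodule ℂ V) : Prop :=
  (∀ v ∈ W, X v ∈ W) ∧ (∀ v ∈ W, Y v ∈ W) ∧ ∀ h : Γ, ∀ v ∈ W, ρ h v ∈ W

/-- Irreducibility: `V ≠ 0` and the only subspaces stable under `X`, `Y` and all `ρ(h)`
are `0` and `V`. -/
def Irred2 {Γ : Type*} {V : Type*} [AddCommGroup V] [Module ℂ V]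
    (ρ : Γ → Module.End ℂ V) (X Y : Module.End ℂ V) : Prop :=
  (∃ v : V, v ≠ 0) ∧ ∀ W : Submodule ℂ V, Stable2 ρ X Y W → W = ⊥ ∨ W = ⊤

/-- The sequence `c_i` defined by `c₀ = c` and
`c_i = q·(c_{i−1} + ν − ν·q^{2(i−1)}·γ)` for `i ≥ 1`. -/
def cseq (q ν γ c : ℂ) : ℕ → ℂ
  | 0 => c
  | i + 1 => q * (cseq q ν γ c i + ν - ν * q ^ (2 * i) * γ)

/-- `(V, ρ, X, Y)` is a case-IV representation: a representation with in addition
`X^r = 0`, `Y^r = 0` and `X∘Y = q⁻¹·(Y∘X) + ρ(g₁g₂) − id`, where `q = χ₁(g₁)`. -/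
def IsRepIV {Γ : Type*} [CommGroup Γ] (g₁ g₂ : Γ) (χ₁ χ₂ : Γ →* ℂˣ)
    (Λ : Subgroup Γ) (ξ : ↥Λ →* ℂˣ) (r : ℕ)
    {V : Type*} [AddCommGroup V] [Module ℂ V]
    (ρ : Γ → Module.End ℂ V) (X Y : Module.End ℂ V) : Prop :=
  IsRep χ₁ χ₂ Λ ξ ρ X Y ∧ X ^ r = 0 ∧ Y ^ r = 0 ∧
    X * Y = (((χ₁ g₁ : ℂˣ) : ℂ))⁻¹ • (Y * X) + ρ (g₁ * g₂) - 1

/-- The action of `h ∈ Γ` on `L(η)`, with `ρ(h)·v_i = η(h)·χ₁(h)^i·v_i` on the basis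
`v₀, …, v_{N−1}` of `Fin N → ℂ`. -/
def fRho (N : ℕ) {Γ : Type*} [CommGroup Γ] (χ₁ η : Γ →* ℂˣ) (h : Γ) :
    Module.End ℂ (Fin N → ℂ) where
  toFun v := fun j => (η h : ℂ) * (χ₁ h : ℂ) ^ (j : ℕ) * v j
  map_add' v w := by funext j; simp [mul_add]
  map_smul' a v := by funext j; simp [smul_eq_mul]; ring

/-- The operator `X` on `L(η)`, with `X·v_i = v_{i+1}` and `v_N := 0`. -/
def fX (N : ℕ) : Module.End ℂ (Fin N → ℂ) where
  toFun v := fun j => if h : (j : ℕ) = 0 then 0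
    else v ⟨(j : ℕ) - 1, lt_of_le_of_lt (Nat.sub_le _ 1) j.isLt⟩
  map_add' v w := by funext j; by_cases h : (j : ℕ) = 0 <;> simp [h]
  map_smul' a v := by funext j; by_cases h : (j : ℕ) = 0 <;> simp [h]

/-- The operator `Y` on `L(η)`, with `Y·v_i = c_i·v_{i−1}` and `v_{−1} := 0`. -/
def fY (N : ℕ) (cs : ℕ → ℂ) : Module.End ℂ (Fin N → ℂ) where
  toFun v := fun j => if h : (j : ℕ) + 1 < N then cs ((j : ℕ) + 1) * v ⟨(j : ℕ) + 1, h⟩ else 0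
  map_add' v w := by funext j; by_cases h : (j : ℕ) + 1 < N <;> simp [h, mul_add]
  map_smul' a v := by
    funext j; by_cases h : (j : ℕ) + 1 < N <;> simp [h, smul_eq_mul] <;> ring


lemma exists_common_eigenvector {Γ : Type*} [CommGroup Γ] [Fintype Γ]
    {V : Type*} [AddCommGroup V] [Module ℂ V] [FiniteDimensional ℂ V]
    (ρ : Γ → Module.End ℂ V)
    (hmul : ∀ a b : Γ, ρ (a * b) = ρ a * ρ b)
    (W : Submodule ℂ V) (hW : W ≠ ⊥) (hWst : ∀ h : Γ, ∀ w ∈ W, ρ h w ∈ W) :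
    ∃ v₀ ∈ W, v₀ ≠ 0 ∧ ∀ h : Γ, ∃ μ : ℂ, ρ h v₀ = μ • v₀ := by
  suffices H : ∀ l : List Γ, ∃ U : Submodule ℂ V, U ≤ W ∧ U ≠ ⊥ ∧
      (∀ h : Γ, ∀ w ∈ U, ρ h w ∈ U) ∧ ∀ h ∈ l, ∃ μ : ℂ, ∀ w ∈ U, ρ h w = μ • w by
    obtain ⟨U, hUW, hUne, _, hl⟩ := H Finset.univ.toList
    obtain ⟨v₀, hv₀U, hv₀⟩ := Submodule.ne_bot_iff U |>.mp hUne
    refine ⟨v₀, hUW hv₀U, hv₀, fun h => ?_⟩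
    obtain ⟨μ, hμ⟩ := hl h (Finset.mem_toList.mpr (Finset.mem_univ h))
    exact ⟨μ, hμ v₀ hv₀U⟩
  intro l
  induction l with
  | nil => exact ⟨W, le_rfl, hW, hWst, by simp⟩
  | cons h₀ l ih =>
    obtain ⟨U, hUW, hUne, hUst, hl⟩ := ih
    haveI : Nontrivial ↥U := Submodule.nontrivial_iff_ne_bot.mpr hUne
    obtain ⟨μ₀, hμ₀⟩ := Module.End.exists_eigenvalue ((ρ h₀).restrict (hUst h₀))
    obtain ⟨u, hu⟩ := hμ₀.exists_hasEigenvector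
    refine ⟨U ⊓ Module.End.eigenspace (ρ h₀) μ₀, inf_le_left.trans hUW, ?_, ?_, ?_⟩
    · rw [Submodule.ne_bot_iff]
      refine ⟨(u : V), Submodule.mem_inf.mpr ⟨u.2, ?_⟩, fun hz => hu.2 (by ext; exact hz)⟩
      rw [Module.End.mem_eigenspace_iff]
      have := hu.1
      rw [Module.End.mem_eigenspace_iff] at this
      have := congrArg (Subtype.val) this
      simpa [LinearMap.restrict_apply] using this
    · intro h w hw
      obtain ⟨hw1, hw2⟩ := Submodule.mem_inf.mp hw
      refine Submodule.mem_inf.mpr ⟨hUst h w hw1, ?_⟩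
      rw [Module.End.mem_eigenspace_iff] at hw2 ⊢
      have hc : ρ h₀ * ρ h = ρ h * ρ h₀ := by
        rw [← hmul, ← hmul, mul_comm]
      calc ρ h₀ (ρ h w) = ρ h (ρ h₀ w) := by
              have := congrArg (fun f => f w) hc; simpa using this
        _ = μ₀ • ρ h w := by rw [hw2, map_smul]
    · rintro h hh
      rcases List.mem_cons.mp hh with rfl | hh
      · exact ⟨μ₀, fun w hw => Module.End.mem_eigenspace_iff.mp (Submodule.mem_inf.mp hw).2⟩
      · obtain ⟨μ, hμ⟩ := hl h hh
        exact ⟨μ, fun w hw => hμ w (Submodule.mem_inf.mp hw).1⟩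

lemma span_stable {V : Type*} [AddCommGroup V] [Module ℂ V]
    (T : Module.End ℂ V) (s : Set V) (h : ∀ x ∈ s, T x ∈ Submodule.span ℂ s) :
    ∀ w ∈ Submodule.span ℂ s, T w ∈ Submodule.span ℂ s := by
  intro w hw
  have h1 : T w ∈ Submodule.map T (Submodule.span ℂ s) := Submodule.mem_map_of_mem hw
  rw [Submodule.map_span] at h1
  refine Submodule.span_le.mpr ?_ h1
  rintro _ ⟨x, hx, rfl⟩
  exact h x hx


lemma fX_apply (N : ℕ) (f : Fin N → ℂ) (k : Fin N) :
    fX N f k = if h : (k : ℕ) = 0 then 0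
      else f ⟨(k : ℕ) - 1, lt_of_le_of_lt (Nat.sub_le _ 1) k.isLt⟩ := rfl

lemma fY_apply (N : ℕ) (cs : ℕ → ℂ) (f : Fin N → ℂ) (k : Fin N) :
    fY N cs f k = if h : (k : ℕ) + 1 < N then cs ((k : ℕ) + 1) * f ⟨(k : ℕ) + 1, h⟩
      else 0 := rfl

lemma fRho_apply (N : ℕ) {Γ : Type*} [CommGroup Γ] (χ₁ η : Γ →* ℂˣ) (h : Γ)
    (f : Fin N → ℂ) (k : Fin N) :
    fRho N χ₁ η h f k = (η h : ℂ) * (χ₁ h : ℂ) ^ (k : ℕ) * f k := rfl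

/-- Case (IV), classification: every irreducible case-IV representation `(V, ρ, X, Y)` is
isomorphic, via a linear isomorphism intertwining `X`, `Y` and every `ρ(h)`, to `L(η)`
for some character `η` of `Γ` with `η|_Λ = ξ`, where `L(η)` is built on `Fin N → ℂ` for
`N` the least positive integer with `c_N = 0`. -/
theorem caseIV_classification {Γ : Type*} [CommGroup Γ] [Fintype Γ] (g₁ g₂ : Γ)
    (χ₁ χ₂ : Γ →* ℂˣ) (hχ₂ : χ₂ = χ₁⁻¹) (h12 : χ₁ g₂ * χ₂ g₁ = 1)
    (r : ℕ) (hr : 1 < r) (hq : IsPrimitiveRoot ((χ₁ g₁ : ℂˣ) : ℂ) r)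
    (Λ : Subgroup Γ) (hΛ : ∀ g : Γ, g ∈ Λ ↔ (χ₁ g = 1 ∧ χ₂ g = 1)) (ξ : ↥Λ →* ℂˣ)
    (V : Type*) [AddCommGroup V] [Module ℂ V] [FiniteDimensional ℂ V]
    (ρ : Γ → Module.End ℂ V) (X Y : Module.End ℂ V)
    (hrep : IsRepIV g₁ g₂ χ₁ χ₂ Λ ξ r ρ X Y) (hirr : Irred2 ρ X Y) :
    ∃ η : Γ →* ℂˣ, (∀ g : Λ, η (g : Γ) = ξ g) ∧
      ∃ N : ℕ, 0 < N ∧ cseq ((χ₁ g₁ : ℂˣ) : ℂ) 1 ((η (g₁ * g₂) : ℂˣ) : ℂ) 0 N = 0 ∧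
        (∀ m : ℕ, 0 < m →
          cseq ((χ₁ g₁ : ℂˣ) : ℂ) 1 ((η (g₁ * g₂) : ℂˣ) : ℂ) 0 m = 0 → N ≤ m) ∧
        ∃ φ : V ≃ₗ[ℂ] (Fin N → ℂ),
          (∀ v : V, φ (X v) = fX N (φ v)) ∧
          (∀ v : V, φ (Y v) =
            fY N (cseq ((χ₁ g₁ : ℂˣ) : ℂ) 1 ((η (g₁ * g₂) : ℂˣ) : ℂ) 0) (φ v)) ∧
          ∀ (h : Γ) (v : V), φ (ρ h v) = fRho N χ₁ η h (φ v) := by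
  classical
  obtain ⟨⟨hmul, hone, hXc, hYc, hΛξ⟩, hXr, hYr, hcom⟩ := hrep
  obtain ⟨w₀, hw₀⟩ := hirr.1
  set q : ℂ := ((χ₁ g₁ : ℂˣ) : ℂ) with hqdef
  have hq0 : q ≠ 0 := Units.ne_zero _
  -- χ₁ g₂ = χ₁ g₁
  have hg2 : χ₁ g₂ = χ₁ g₁ := by
    rw [hχ₂] at h12
    have : χ₁ g₂ * (χ₁ g₁)⁻¹ = 1 := h12
    rwa [mul_inv_eq_one] at this
  have hχ12 : ((χ₁ (g₁ * g₂) : ℂˣ) : ℂ) = q ^ 2 := by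
    rw [map_mul, hg2]; push_cast; ring
  -- χ₂ values are inverses
  have hχ₂val : ∀ h : Γ, ((χ₂ h : ℂˣ) : ℂ) ≠ 0 := fun h => Units.ne_zero _
  -- ker Y is nonzero
  haveI : NoZeroSMulDivisors ℂ V := inferInstance
  have hker : LinearMap.ker Y ≠ ⊥ := by
    intro hk
    have hinj : Function.Injective Y := LinearMap.ker_eq_bot.mp hk
    have h0 : (Y ^ r) w₀ = 0 := by rw [hYr]; rfl
    rw [Module.End.pow_apply] at h0
    have h1 : (⇑Y)^[r] (0 : V) = 0 := Function.iterate_fixed (map_zero Y) r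
    exact hw₀ (hinj.iterate r (h0.trans h1.symm))
  have hkerst : ∀ h : Γ, ∀ w ∈ LinearMap.ker Y, ρ h w ∈ LinearMap.ker Y := by
    intro h w hw
    rw [LinearMap.mem_ker] at hw ⊢
    have h2 : ρ h (Y w) = ((χ₂ h : ℂˣ) : ℂ) • Y (ρ h w) := by
      have := congrArg (fun f => f w) (hYc h)
      simpa [Module.End.mul_apply] using this
    rw [hw, map_zero] at h2
    exact (smul_eq_zero.mp h2.symm).resolve_left (hχ₂val h)
  obtain ⟨v₀, hv₀ker, hv₀ne, hμex⟩ :=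
    exists_common_eigenvector ρ hmul (LinearMap.ker Y) hker hkerst
  rw [LinearMap.mem_ker] at hv₀ker
  choose μ hμ using hμex
  have hinjsmul := smul_left_injective ℂ (M := V) hv₀ne
  have hμ_one : μ 1 = 1 := by
    apply hinjsmul
    show μ 1 • v₀ = (1 : ℂ) • v₀
    rw [← hμ, hone, one_smul, Module.End.one_apply]
  have hμ_mul : ∀ a b : Γ, μ (a * b) = μ a * μ b := by
    intro a b
    apply hinjsmul
    show μ (a * b) • v₀ = (μ a * μ b) • v₀
    rw [← hμ, hmul, Module.End.mul_apply, hμ, map_smul, hμ, smul_smul, mul_comm]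
  have hμ_ne : ∀ h : Γ, μ h ≠ 0 := by
    intro h hz
    have : μ h * μ h⁻¹ = 1 := by rw [← hμ_mul, mul_inv_cancel, hμ_one]
    rw [hz, zero_mul] at this
    exact zero_ne_one this
  set η : Γ →* ℂˣ := MonoidHom.mk' (fun h => Units.mk0 (μ h) (hμ_ne h))
      (fun a b => Units.ext (hμ_mul a b)) with hηdef
  have hηval : ∀ h : Γ, ((η h : ℂˣ) : ℂ) = μ h := fun h => rfl
  have hηΛ : ∀ g : Λ, η (g : Γ) = ξ g := by
    intro g
    apply Units.ext
    apply hinjsmul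
    show μ (g : Γ) • v₀ = ((ξ g : ℂˣ) : ℂ) • v₀
    rw [← hμ, hΛξ g]
    simp
  set γ : ℂ := ((η (g₁ * g₂) : ℂˣ) : ℂ) with hγdef
  set c : ℕ → ℂ := cseq q 1 γ 0 with hcdef
  set v : ℕ → V := fun i => (X ^ i) v₀ with hvdef
  have hv0 : v 0 = v₀ := by simp [hvdef]
  have hvs : ∀ i, v (i + 1) = X (v i) := by
    intro i; simp only [hvdef, pow_succ']; rfl
  have hρv : ∀ (h : Γ) (i : ℕ),
      ρ h (v i) = ((μ h) * ((χ₁ h : ℂˣ) : ℂ) ^ i) • v i := by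
    intro h i
    induction i with
    | zero => rw [hv0, hμ]; simp
    | succ i ih =>
      have h2 : ρ h (X (v i)) = ((χ₁ h : ℂˣ) : ℂ) • X (ρ h (v i)) := by
        have := congrArg (fun f => f (v i)) (hXc h)
        simpa [Module.End.mul_apply] using this
      rw [hvs, h2, ih, map_smul, smul_smul]
      congr 1
      ring
  have hρ12 : ∀ i : ℕ, ρ (g₁ * g₂) (v i) = (γ * q ^ (2 * i)) • v i := by
    intro i
    rw [hρv, hχ12, hγdef, hηval, ← pow_mul]
  -- the commutation relation pointwise
  have hYX : ∀ w : V, Y (X w) = q • (X (Y w) - ρ (g₁ * g₂) w + w) := by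
    intro w
    have h1 := congrArg (fun f => f w) hcom
    simp only [Module.End.mul_apply, LinearMap.smul_apply, LinearMap.add_apply,
      LinearMap.sub_apply, Module.End.one_apply] at h1
    have h2 : q⁻¹ • Y (X w) = X (Y w) - ρ (g₁ * g₂) w + w := by
      rw [h1]; abel
    calc Y (X w) = q • (q⁻¹ • Y (X w)) := by
          rw [smul_smul, mul_inv_cancel₀ hq0, one_smul]
      _ = q • (X (Y w) - ρ (g₁ * g₂) w + w) := by rw [h2]
  have hYv0 : Y (v 0) = 0 := by rw [hv0]; exact hv₀ker
  have hYv : ∀ i : ℕ, Y (v (i + 1)) = c (i + 1) • v i := by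
    intro i
    induction i with
    | zero =>
      have h1 : Y (v (0 + 1)) = q • (X (Y (v 0)) - ρ (g₁ * g₂) (v 0) + v 0) := by
        rw [hvs 0]; exact hYX _
      have h2 : c (0 + 1) = q * (0 + 1 - 1 * q ^ (2 * 0) * γ) := rfl
      rw [h1, h2, hYv0, map_zero, hρ12]
      match_scalars <;> ring
    | succ i ih =>
      have h1 : Y (v (i + 1 + 1)) = q • (X (Y (v (i + 1))) - ρ (g₁ * g₂) (v (i + 1)) + v (i + 1)) := by
        rw [hvs (i + 1)]; exact hYX _
      have h2 : c (i + 1 + 1) = q * (c (i + 1) + 1 - 1 * q ^ (2 * (i + 1)) * γ) := rfl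
      rw [h1, h2, ih, map_smul, ← hvs i, hρ12, hvs i]
      match_scalars <;> ring
  have hvr : v r = 0 := by
    have := congrArg (fun f => f v₀) hXr
    simpa [hvdef] using this
  have hex : ∃ n, v (n + 1) = 0 := ⟨r - 1, by rwa [Nat.sub_add_cancel (by omega)]⟩
  set N : ℕ := Nat.find hex + 1 with hNdef
  have hN0 : 0 < N := Nat.succ_pos _
  have hvN : v N = 0 := Nat.find_spec hex
  have hNr : N ≤ r := by
    have : Nat.find hex ≤ r - 1 := Nat.find_le (by rwa [Nat.sub_add_cancel (by omega)])
    omega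
  have hvne : ∀ i < N, v i ≠ 0 := by
    intro i hi hz
    match i, hz with
    | 0, hz => exact hv₀ne (hv0 ▸ hz)
    | j + 1, hz => exact Nat.find_min hex (by omega) hz
  have hvbig : ∀ i, N ≤ i → v i = 0 := by
    intro i hi
    induction i with
    | zero => omega
    | succ j ih =>
      rcases Nat.lt_or_ge N (j + 1) with h | h
      · rw [hvs, ih (by omega), map_zero]
      · have : N = j + 1 := by omega
        rw [← this]; exact hvN
  have hcN : c N = 0 := by
    have h1 : Y (v N) = c N • v (N - 1) := by
      have : N - 1 + 1 = N := by omega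
      rw [← this]; exact hYv (N - 1)
    rw [hvN, map_zero] at h1
    exact ((smul_eq_zero.mp h1.symm).resolve_right (hvne (N - 1) (by omega)))
  -- linear independence
  have hqpow_inj : ∀ i j : Fin N, (μ g₁) * q ^ (i : ℕ) = (μ g₁) * q ^ (j : ℕ) → i = j := by
    intro i j hij
    have := mul_left_cancel₀ (hμ_ne g₁) hij
    exact Fin.ext (hq.pow_inj (lt_of_lt_of_le i.isLt hNr) (lt_of_lt_of_le j.isLt hNr) this)
  have hli : LinearIndependent ℂ (fun i : Fin N => v i) := by
    apply Module.End.eigenvectors_linearIndependent' (ρ g₁)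
      (fun i : Fin N => (μ g₁) * q ^ (i : ℕ)) (fun i j => hqpow_inj i j)
    intro i
    exact ⟨Module.End.mem_eigenspace_iff.mpr (hρv g₁ i), hvne i i.isLt⟩
  -- span
  have hXst : ∀ w ∈ Submodule.span ℂ (Set.range fun i : Fin N => v i),
      X w ∈ Submodule.span ℂ (Set.range fun i : Fin N => v i) := by
    apply span_stable
    rintro _ ⟨i, rfl⟩
    rw [← hvs]
    rcases Nat.lt_or_ge ((i : ℕ) + 1) N with h | h
    · exact Submodule.subset_span ⟨⟨(i : ℕ) + 1, h⟩, rfl⟩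
    · rw [hvbig _ h]; exact Submodule.zero_mem _
  have hYst : ∀ w ∈ Submodule.span ℂ (Set.range fun i : Fin N => v i),
      Y w ∈ Submodule.span ℂ (Set.range fun i : Fin N => v i) := by
    apply span_stable
    rintro _ ⟨i, rfl⟩
    show Y (v (i : ℕ)) ∈ _
    rcases hi : (i : ℕ) with _ | j
    · rw [hYv0]; exact Submodule.zero_mem _
    · rw [hYv]
      refine Submodule.smul_mem _ _ (Submodule.subset_span ⟨⟨j, by omega⟩, rfl⟩)
  have hρst : ∀ h : Γ, ∀ w ∈ Submodule.span ℂ (Set.range fun i : Fin N => v i),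
      ρ h w ∈ Submodule.span ℂ (Set.range fun i : Fin N => v i) := by
    intro h
    apply span_stable
    rintro _ ⟨i, rfl⟩
    rw [hρv]
    exact Submodule.smul_mem _ _ (Submodule.subset_span ⟨i, rfl⟩)
  have hspan : ⊤ ≤ Submodule.span ℂ (Set.range fun i : Fin N => v i) := by
    rcases hirr.2 _ ⟨hXst, hYst, hρst⟩ with h | h
    · exfalso
      have : v 0 ∈ Submodule.span ℂ (Set.range fun i : Fin N => v i) :=
        Submodule.subset_span ⟨⟨0, hN0⟩, rfl⟩
      rw [h, Submodule.mem_bot] at this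
      exact hvne 0 hN0 this
    · exact h.ge
  set B : Module.Basis (Fin N) ℂ V := Module.Basis.mk hli hspan with hBdef
  have hB : ∀ i : Fin N, B i = v i := fun i => Module.Basis.mk_apply hli hspan i
  -- minimality of N
  have hmin : ∀ m : ℕ, 0 < m → c m = 0 → N ≤ m := by
    intro m hm hcm
    by_contra hlt
    push_neg at hlt
    set s : Set V := v '' Set.Ici m with hsdef
    have hXs : ∀ w ∈ Submodule.span ℂ s, X w ∈ Submodule.span ℂ s := by
      apply span_stable
      rintro _ ⟨i, hi, rfl⟩
      rw [← hvs]
      exact Submodule.subset_span ⟨i + 1, by simpa using le_trans hi (by omega), rfl⟩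
    have hYs : ∀ w ∈ Submodule.span ℂ s, Y w ∈ Submodule.span ℂ s := by
      apply span_stable
      rintro _ ⟨i, hi, rfl⟩
      simp only [Set.mem_Ici] at hi
      match i, hi with
      | j + 1, hi =>
        rw [hYv]
        rcases eq_or_lt_of_le hi with heq | hlt2
        · rw [← heq, hcm, zero_smul]; exact Submodule.zero_mem _
        · exact Submodule.smul_mem _ _ (Submodule.subset_span ⟨j, by simp [Set.mem_Ici]; omega, rfl⟩)
      | 0, hi => omega
    have hρs : ∀ h : Γ, ∀ w ∈ Submodule.span ℂ s, ρ h w ∈ Submodule.span ℂ s := by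
      intro h
      apply span_stable
      rintro _ ⟨i, hi, rfl⟩
      rw [hρv]
      exact Submodule.smul_mem _ _ (Submodule.subset_span ⟨i, hi, rfl⟩)
    rcases hirr.2 _ ⟨hXs, hYs, hρs⟩ with h | h
    · have : v m ∈ Submodule.span ℂ s :=
        Submodule.subset_span ⟨m, le_refl m, rfl⟩
      rw [h, Submodule.mem_bot] at this
      exact hvne m hlt this
    · -- span s = ⊤, but v 0 = B 0 not in span of B '' {j | m ≤ j}
      have hsub : Submodule.span ℂ s ≤
          Submodule.span ℂ (B '' {j : Fin N | m ≤ (j : ℕ)}) := by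
        apply Submodule.span_le.mpr
        rintro _ ⟨i, hi, rfl⟩
        simp only [Set.mem_Ici] at hi
        rcases Nat.lt_or_ge i N with h2 | h2
        · apply Submodule.subset_span
          exact ⟨⟨i, h2⟩, hi, hB _⟩
        · rw [hvbig _ h2]; exact Submodule.zero_mem _
      have h0mem : B ⟨0, hN0⟩ ∈ Submodule.span ℂ (B '' {j : Fin N | m ≤ (j : ℕ)}) := by
        apply hsub
        rw [h]; trivial
      rw [Module.Basis.mem_span_image] at h0mem
      have : (⟨0, hN0⟩ : Fin N) ∈ (B.repr (B ⟨0, hN0⟩)).support := by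
        rw [Module.Basis.repr_self]
        simp
      have := h0mem this
      simp only [Set.mem_setOf_eq] at this
      omega
  -- the isomorphism
  set φ : V ≃ₗ[ℂ] (Fin N → ℂ) := B.equivFun with hφdef
  have hφB : ∀ i j : Fin N, φ (B i) j = if i = j then 1 else 0 := fun i j =>
    B.equivFun_self i j
  have hφv : ∀ j : ℕ, φ (v j) = fun k : Fin N => if j = (k : ℕ) then 1 else 0 := by
    intro j
    rcases Nat.lt_or_ge j N with hj | hj
    · have hvj : v j = B ⟨j, hj⟩ := (hB ⟨j, hj⟩).symm
      rw [hvj]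
      funext k
      rw [hφB]
      simp [Fin.ext_iff]
    · rw [hvbig j hj, map_zero]
      funext k
      have : j ≠ (k : ℕ) := by have := k.isLt; omega
      simp [this]
  refine ⟨η, hηΛ, N, hN0, hcN, hmin, φ, ?_, ?_, ?_⟩
  · -- X intertwining
    have key : ∀ i : Fin N, (φ.toLinearMap ∘ₗ X) (B i) = (fX N ∘ₗ φ.toLinearMap) (B i) := by
      intro i
      simp only [LinearMap.comp_apply, LinearEquiv.coe_coe]
      rw [hB, ← hvs, hφv, hφv]
      funext k
      simp only [fX_apply]
      by_cases hk : (k : ℕ) = 0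
      · rw [dif_pos hk, if_neg (by omega)]
      · rw [dif_neg hk]
        by_cases hik : (i : ℕ) + 1 = (k : ℕ)
        · rw [if_pos hik, if_pos (by omega)]
        · rw [if_neg hik, if_neg (by omega)]
    have heq : (φ.toLinearMap ∘ₗ X) = (fX N ∘ₗ φ.toLinearMap) := B.ext key
    intro w
    have := LinearMap.ext_iff.mp heq w
    simpa only [LinearMap.comp_apply, LinearEquiv.coe_coe] using this
  · -- Y intertwining
    have key : ∀ i : Fin N,
        (φ.toLinearMap ∘ₗ Y) (B i) = (fY N c ∘ₗ φ.toLinearMap) (B i) := by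
      intro i
      simp only [LinearMap.comp_apply, LinearEquiv.coe_coe]
      rw [hB, hφv]
      show φ (Y (v (i : ℕ))) = _
      rcases hi : (i : ℕ) with _ | j
      · rw [hYv0, map_zero]
        funext k
        simp only [fY_apply, Pi.zero_apply]
        by_cases hk : (k : ℕ) + 1 < N
        · rw [dif_pos hk, if_neg (by omega), mul_zero]
        · rw [dif_neg hk]
      · rw [hYv, map_smul, hφv]
        funext k
        simp only [fY_apply, Pi.smul_apply, smul_eq_mul]
        by_cases hk : (k : ℕ) + 1 < N
        · rw [dif_pos hk]
          by_cases hjk : j = (k : ℕ)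
          · rw [if_pos hjk, if_pos (by omega), hjk]
          · rw [if_neg hjk, if_neg (by omega), mul_zero, mul_zero]
        · rw [dif_neg hk, if_neg (by have := i.isLt; omega), mul_zero]
    have heq : (φ.toLinearMap ∘ₗ Y) = (fY N c ∘ₗ φ.toLinearMap) := B.ext key
    intro w
    have := LinearMap.ext_iff.mp heq w
    simpa only [LinearMap.comp_apply, LinearEquiv.coe_coe] using this
  · -- ρ intertwining
    intro h
    have key : ∀ i : Fin N,
        (φ.toLinearMap ∘ₗ ρ h) (B i) = (fRho N χ₁ η h ∘ₗ φ.toLinearMap) (B i) := by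
      intro i
      simp only [LinearMap.comp_apply, LinearEquiv.coe_coe]
      rw [hB, hρv, map_smul, hφv]
      funext k
      simp only [fRho_apply]
      simp only [Pi.smul_apply, smul_eq_mul]
      by_cases hik : (i : ℕ) = (k : ℕ)
      · rw [if_pos hik, hηval, hik]
      · rw [if_neg hik, mul_zero, mul_zero]
    have heq : (φ.toLinearMap ∘ₗ ρ h) = (fRho N χ₁ η h ∘ₗ φ.toLinearMap) := B.ext key
    intro w
    have := LinearMap.ext_iff.mp heq w
    simpa only [LinearMap.comp_apply, LinearEquiv.coe_coe] using this
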